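/- Suppose distances from all vertices to q are distinct and every vertex among the N_q nearest neighbors of q is K_h-reachable from every other (i.e., EH(N_{i,q}, N_{j,q}, q, G) ≤ K_h for all 1 ≤ i,j ≤ N_q), and the entry point is N_{1,q} (or any vertex among the N_q nearest). Then greedy beam search with query q, result-list size L = K_h ≥ N_q, and k ≤ N_q returns exactly the k nearest neighbors of q, i.e., recall@k = 100%. -/

import Mathlib

attribute [local instance] Classical.propDecidable

/-- The state of greedy beam search (Algorithm 1): the set `C` of unexpanded
candidates, the result set `R`, and the set of visited vertices. -/
structure SState (V : Type*) where
  C : Finset V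
  R : Finset V
  visited : Finset V

variable {V : Type*} [Fintype V] [DecidableEq V]

/-- `rank dist x = i` means `x` is the `i`-th nearest vertex to the query
(with respect to the distance-to-query function `dist`), i.e. `F_{x,q} = i`. -/
noncomputable def rank (dist : V → ℝ) (x : V) : ℕ :=
  (Finset.univ.filter fun y => dist y ≤ dist x).card

/-- Keep only the `L` closest (to the query) elements of `R`. -/
noncomputable def truncate (dist : V → ℝ) (L : ℕ) (R : Finset V) : Finset V :=
  R.filter fun x => (R.filter fun y => dist y ≤ dist x).card ≤ L

/-- An element of `C` closest to the query. -/
noncomputable def argmin (dist : V → ℝ) (C : Finset V) (h : C.Nonempty) : V :=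
  (C.exists_min_image dist h).choose

/-- Insertion condition of Algorithm 1: `|R| < L` or `δ(v,q) < d_max`. -/
def insertCond (dist : V → ℝ) (L : ℕ) (R : Finset V) (v : V) : Prop :=
  R.card < L ∨ ∃ x ∈ R, dist v < dist x

/-- Inner loop of Algorithm 1: process the (unvisited) neighbors of the popped
vertex one by one, inserting them into `C` and `R` and truncating `R` to its
`L` closest elements. -/
noncomputable def insertLoop (dist : V → ℝ) (L : ℕ) : List V → SState V → SState V
  | [], s => s
  | v :: vs, s =>
    insertLoop dist L vs <|
      if v ∈ s.visited then s
      else if insertCond dist L s.R v then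
        ⟨insert v s.C, truncate dist L (insert v s.R), insert v s.visited⟩
      else ⟨s.C, s.R, insert v s.visited⟩

/-- Main loop of Algorithm 1 (greedy beam search) with explicit fuel.
At each step the closest unexpanded candidate `u` is popped; the loop breaks if
`δ(u,q) > d_max` (i.e. every element of the nonempty `R` is strictly closer
than `u`), and otherwise expands `u`. -/
noncomputable def gloop (Adj : V → V → Prop) (dist : V → ℝ) (L : ℕ) :
    ℕ → SState V → SState V
  | 0, s => s
  | n + 1, s =>
    if hC : s.C.Nonempty then
      let u := argmin dist s.C hC
      if s.R.Nonempty ∧ ∀ x ∈ s.R, dist x < dist u then s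
      else
        gloop Adj dist L n
          (insertLoop dist L ((Finset.univ.filter fun v => Adj u v).toList)
            ⟨s.C.erase u, s.R, s.visited⟩)
    else s

/-- Greedy beam search on the graph `Adj` with distance-to-query `dist`,
result-list size `L` and entry point `ep`. -/
noncomputable def search (Adj : V → V → Prop) (dist : V → ℝ) (L : ℕ) (ep : V) : SState V :=
  gloop Adj dist L (Fintype.card V + 1) ⟨{ep}, {ep}, {ep}⟩

/-- Adjacency of `NG_{S,q}`, the subgraph of `Adj` induced by the `S` nearest
vertices to the query. -/
def AdjS (Adj : V → V → Prop) (dist : V → ℝ) (S : ℕ) (a b : V) : Prop :=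
  Adj a b ∧ rank dist a ≤ S ∧ rank dist b ≤ S

/-- `p` is a directed path from `u` to `v` in the graph `Adj`. -/
def IsPathFrom (Adj : V → V → Prop) (u v : V) (p : List V) : Prop :=
  p.head? = some u ∧ p.getLast? = some v ∧ p.Chain' Adj

/-- Escape Hardness `EH(u,v,q,G)`: the minimum, over directed paths `p` from
`u` to `v` in `G`, of the maximum rank (w.r.t. distance to the query) of a
vertex on `p`; it is `⊤` (infinity) if `v` is unreachable from `u`. -/
noncomputable def EH (Adj : V → V → Prop) (rk : V → ℕ) (u v : V) : ℕ∞ :=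
  sInf {n : ℕ∞ | ∃ p : List V, IsPathFrom Adj u v p ∧ n = ((p.map rk).foldr max 0 : ℕ)}

set_option linter.unusedSectionVars false

section BeamSearchProof

variable {V : Type*} [Fintype V] [DecidableEq V]

namespace BeamProof

lemma rank_mono (dist : V → ℝ) {x y : V} (h : dist y ≤ dist x) :
    rank dist y ≤ rank dist x := by
  apply Finset.card_le_card
  intro z hz
  simp only [Finset.mem_filter, Finset.mem_univ, true_and] at hz ⊢
  exact le_trans hz h

lemma rank_lt_rank (dist : V → ℝ) {x y : V} (h : dist x < dist y) :
    rank dist x < rank dist y := by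
  apply Finset.card_lt_card
  constructor
  · intro z hz
    simp only [Finset.mem_filter, Finset.mem_univ, true_and] at hz ⊢
    exact le_trans hz h.le
  · intro hsub
    have hy := hsub (Finset.mem_filter.mpr ⟨Finset.mem_univ y, le_refl _⟩)
    simp only [Finset.mem_filter, Finset.mem_univ, true_and] at hy
    exact absurd hy (not_le.mpr h)

lemma dist_le_of_rank_le (dist : V → ℝ) {x y : V} (h : rank dist y ≤ rank dist x) :
    dist y ≤ dist x := by
  by_contra hc
  exact absurd h (not_le.mpr (rank_lt_rank dist (not_le.mp hc)))

lemma cnt_le_rank (dist : V → ℝ) (S : Finset V) (x : V) :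
    (S.filter fun y => dist y ≤ dist x).card ≤ rank dist x := by
  apply Finset.card_le_card
  intro z hz
  simp only [Finset.mem_filter] at hz ⊢
  exact ⟨Finset.mem_univ z, hz.2⟩

lemma le_rank_of_all_le (dist : V → ℝ) {R : Finset V} {v : V} (hv : v ∉ R)
    (hall : ∀ x ∈ R, dist x ≤ dist v) : R.card + 1 ≤ rank dist v := by
  have hsub : insert v R ⊆ Finset.univ.filter fun y => dist y ≤ dist v := by
    intro z hz
    rcases Finset.mem_insert.mp hz with rfl | hz
    · exact Finset.mem_filter.mpr ⟨Finset.mem_univ _, le_refl _⟩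
    · exact Finset.mem_filter.mpr ⟨Finset.mem_univ _, hall z hz⟩
  calc R.card + 1 = (insert v R).card := (Finset.card_insert_of_notMem hv).symm
    _ ≤ _ := Finset.card_le_card hsub

lemma insertCond_of_rank_le (dist : V → ℝ) (L : ℕ) {R : Finset V} {v : V} (hv : v ∉ R)
    (hrk : rank dist v ≤ L) : insertCond dist L R v := by
  by_contra h
  simp only [insertCond, not_or, not_lt, not_exists] at h
  obtain ⟨hcard, hall⟩ := h
  have hall' : ∀ x ∈ R, dist x ≤ dist v := by
    intro x hx
    have := hall x
    simp only [not_and, not_lt] at this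
    exact this hx
  have := le_rank_of_all_le dist hv hall'
  omega

lemma mem_truncate_of_rank_le (dist : V → ℝ) (L : ℕ) {R : Finset V} {v : V}
    (hv : v ∈ R) (hrk : rank dist v ≤ L) : v ∈ truncate dist L R :=
  Finset.mem_filter.mpr ⟨hv, le_trans (cnt_le_rank dist R v) hrk⟩

lemma truncate_subset (dist : V → ℝ) (L : ℕ) (R : Finset V) :
    truncate dist L R ⊆ R := Finset.filter_subset _ _

lemma argmin_mem (dist : V → ℝ) (C : Finset V) (h : C.Nonempty) :
    argmin dist C h ∈ C := (C.exists_min_image dist h).choose_spec.1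

lemma argmin_le (dist : V → ℝ) (C : Finset V) (h : C.Nonempty) :
    ∀ y ∈ C, dist (argmin dist C h) ≤ dist y :=
  (C.exists_min_image dist h).choose_spec.2

/-- Invariants maintained by the loop. -/
def Inv (Adj : V → V → Prop) (dist : V → ℝ) (L : ℕ) (s : SState V) : Prop :=
  s.R ⊆ s.visited ∧ s.C ⊆ s.visited ∧
  (∀ v ∈ s.visited, rank dist v ≤ L → v ∈ s.R) ∧
  (∀ v ∈ s.visited, rank dist v ≤ L → v ∈ s.C ∨ ∀ w, Adj v w → w ∈ s.visited)

/-- The loop has terminated: either no candidates, or break condition holds. -/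
def Terminal (dist : V → ℝ) (s : SState V) : Prop :=
  ∀ hC : s.C.Nonempty, s.R.Nonempty ∧ ∀ x ∈ s.R, dist x < dist (argmin dist s.C hC)

lemma insertLoop_spec (dist : V → ℝ) (L : ℕ) (l : List V) (s : SState V)
    (h0 : s.R ⊆ s.visited) (h2 : s.C ⊆ s.visited)
    (h1 : ∀ v ∈ s.visited, rank dist v ≤ L → v ∈ s.R) :
    (insertLoop dist L l s).R ⊆ (insertLoop dist L l s).visited ∧
    (insertLoop dist L l s).C ⊆ (insertLoop dist L l s).visited ∧
    (∀ v ∈ (insertLoop dist L l s).visited, rank dist v ≤ L → v ∈ (insertLoop dist L l s).R) ∧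
    s.visited ⊆ (insertLoop dist L l s).visited ∧
    s.C ⊆ (insertLoop dist L l s).C ∧
    (∀ v ∈ l, v ∈ (insertLoop dist L l s).visited) ∧
    (∀ v ∈ (insertLoop dist L l s).C, v ∈ s.C ∨ v ∉ s.visited) ∧
    (∀ v ∈ (insertLoop dist L l s).visited, v ∉ s.visited → rank dist v ≤ L →
      v ∈ (insertLoop dist L l s).C) := by
  induction l generalizing s with
  | nil =>
    simp only [insertLoop]
    exact ⟨h0, h2, h1, fun _ h => h, fun _ h => h, by simp, fun v hv => Or.inl hv,
      fun v hv hnv => absurd hv hnv⟩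
  | cons v vs ih =>
    simp only [insertLoop]
    by_cases hv : v ∈ s.visited
    · rw [if_pos hv]
      obtain ⟨a0, a1, a2, a3, a4, a5, a6, a7⟩ := ih s h0 h2 h1
      refine ⟨a0, a1, a2, a3, a4, ?_, a6, a7⟩
      intro w hw
      rcases List.mem_cons.mp hw with rfl | hw
      · exact a3 hv
      · exact a5 w hw
    · rw [if_neg hv]
      by_cases hc : insertCond dist L s.R v
      · rw [if_pos hc]
        set t : SState V :=
          ⟨insert v s.C, truncate dist L (insert v s.R), insert v s.visited⟩ with ht
        have t0 : t.R ⊆ t.visited := by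
          intro z hz
          have := truncate_subset dist L (insert v s.R) hz
          rcases Finset.mem_insert.mp this with rfl | hz'
          · exact Finset.mem_insert_self _ _
          · exact Finset.mem_insert_of_mem (h0 hz')
        have t2 : t.C ⊆ t.visited := by
          intro z hz
          rcases Finset.mem_insert.mp hz with rfl | hz'
          · exact Finset.mem_insert_self _ _
          · exact Finset.mem_insert_of_mem (h2 hz')
        have t1 : ∀ w ∈ t.visited, rank dist w ≤ L → w ∈ t.R := by
          intro w hw hrk
          rcases Finset.mem_insert.mp hw with rfl | hw'
          · exact mem_truncate_of_rank_le dist L (Finset.mem_insert_self _ _) hrk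
          · exact mem_truncate_of_rank_le dist L
              (Finset.mem_insert_of_mem (h1 w hw' hrk)) hrk
        obtain ⟨b0, b1, b2, b3, b4, b5, b6, b7⟩ := ih t t0 t2 t1
        refine ⟨b0, b1, b2, ?_, ?_, ?_, ?_, ?_⟩
        · exact fun z hz => b3 (Finset.mem_insert_of_mem hz)
        · exact fun z hz => b4 (Finset.mem_insert_of_mem hz)
        · intro w hw
          rcases List.mem_cons.mp hw with rfl | hw
          · exact b3 (Finset.mem_insert_self _ _)
          · exact b5 w hw
        · intro w hw
          rcases b6 w hw with hwC | hwv
          · rcases Finset.mem_insert.mp hwC with rfl | hwC'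
            · exact Or.inr hv
            · exact Or.inl hwC'
          · exact Or.inr fun hws => hwv (Finset.mem_insert_of_mem hws)
        · intro w hw hws hrk
          by_cases hwt : w ∈ t.visited
          · rcases Finset.mem_insert.mp hwt with rfl | hwt'
            · exact b4 (Finset.mem_insert_self _ _)
            · exact absurd hwt' hws
          · exact b7 w hw hwt hrk
      · rw [if_neg hc]
        have hvR : v ∉ s.R := fun h => hv (h0 h)
        have hrkv : ¬ rank dist v ≤ L := fun h => hc (insertCond_of_rank_le dist L hvR h)
        set t : SState V := ⟨s.C, s.R, insert v s.visited⟩ with ht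
        have t0 : t.R ⊆ t.visited := fun z hz => Finset.mem_insert_of_mem (h0 hz)
        have t2 : t.C ⊆ t.visited := fun z hz => Finset.mem_insert_of_mem (h2 hz)
        have t1 : ∀ w ∈ t.visited, rank dist w ≤ L → w ∈ t.R := by
          intro w hw hrk
          rcases Finset.mem_insert.mp hw with rfl | hw'
          · exact absurd hrk hrkv
          · exact h1 w hw' hrk
        obtain ⟨b0, b1, b2, b3, b4, b5, b6, b7⟩ := ih t t0 t2 t1
        refine ⟨b0, b1, b2, ?_, b4, ?_, ?_, ?_⟩
        · exact fun z hz => b3 (Finset.mem_insert_of_mem hz)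
        · intro w hw
          rcases List.mem_cons.mp hw with rfl | hw
          · exact b3 (Finset.mem_insert_self _ _)
          · exact b5 w hw
        · intro w hw
          rcases b6 w hw with hwC | hwv
          · exact Or.inl hwC
          · exact Or.inr fun hws => hwv (Finset.mem_insert_of_mem hws)
        · intro w hw hws hrk
          by_cases hwt : w ∈ t.visited
          · rcases Finset.mem_insert.mp hwt with rfl | hwt'
            · exact absurd hrk hrkv
            · exact absurd hwt' hws
          · exact b7 w hw hwt hrk

lemma gloop_spec (Adj : V → V → Prop) (dist : V → ℝ) (L : ℕ) (n : ℕ) (s : SState V)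
    (h : Inv Adj dist L s) :
    Inv Adj dist L (gloop Adj dist L n s) ∧ s.visited ⊆ (gloop Adj dist L n s).visited := by
  induction n generalizing s with
  | zero => exact ⟨h, fun _ hz => hz⟩
  | succ n ihn =>
    simp only [gloop]
    by_cases hC : s.C.Nonempty
    · rw [dif_pos hC]
      by_cases hstop : s.R.Nonempty ∧ ∀ x ∈ s.R, dist x < dist (argmin dist s.C hC)
      · rw [if_pos hstop]; exact ⟨h, fun _ hz => hz⟩
      · rw [if_neg hstop]
        set u := argmin dist s.C hC with hu
        set base : SState V := ⟨s.C.erase u, s.R, s.visited⟩ with hbase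
        have hb0 : base.R ⊆ base.visited := h.1
        have hb2 : base.C ⊆ base.visited := fun z hz => h.2.1 (Finset.erase_subset _ _ hz)
        have hb1 : ∀ v ∈ base.visited, rank dist v ≤ L → v ∈ base.R := h.2.2.1
        obtain ⟨b0, b1, b2, b3, b4, b5, b6, b7⟩ :=
          insertLoop_spec dist L ((Finset.univ.filter fun v => Adj u v).toList) base hb0 hb2 hb1
        set s₂ := insertLoop dist L ((Finset.univ.filter fun v => Adj u v).toList) base with hs₂
        have hInv₂ : Inv Adj dist L s₂ := by
          refine ⟨b0, b1, b2, ?_⟩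
          intro w hw hrk
          by_cases hws : w ∈ s.visited
          · rcases h.2.2.2 w hws hrk with hwC | hnb
            · by_cases hwu : w = u
              · subst hwu
                refine Or.inr fun z hz => b5 z ?_
                exact Finset.mem_toList.mpr (Finset.mem_filter.mpr ⟨Finset.mem_univ _, hz⟩)
              · exact Or.inl (b4 (Finset.mem_erase.mpr ⟨hwu, hwC⟩))
            · exact Or.inr fun z hz => b3 (hnb z hz)
          · exact Or.inl (b7 w hw hws hrk)
        obtain ⟨c0, c1⟩ := ihn s₂ hInv₂
        exact ⟨c0, fun z hz => c1 (b3 hz)⟩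
    · rw [dif_neg hC]; exact ⟨h, fun _ hz => hz⟩

lemma gloop_terminal (Adj : V → V → Prop) (dist : V → ℝ) (L : ℕ) (n : ℕ) (s : SState V)
    (h0 : s.R ⊆ s.visited) (h2 : s.C ⊆ s.visited)
    (h1 : ∀ v ∈ s.visited, rank dist v ≤ L → v ∈ s.R)
    (hn : Fintype.card V + 1 ≤ n + (s.visited \ s.C).card) :
    Terminal dist (gloop Adj dist L n s) := by
  induction n generalizing s with
  | zero =>
    exfalso
    have : (s.visited \ s.C).card ≤ Fintype.card V := by
      simpa using Finset.card_le_card (Finset.subset_univ (s.visited \ s.C))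
    omega
  | succ n ihn =>
    simp only [gloop]
    by_cases hC : s.C.Nonempty
    · rw [dif_pos hC]
      by_cases hstop : s.R.Nonempty ∧ ∀ x ∈ s.R, dist x < dist (argmin dist s.C hC)
      · rw [if_pos hstop]
        intro hC'
        exact hstop
      · rw [if_neg hstop]
        set u := argmin dist s.C hC with hu
        have huC : u ∈ s.C := argmin_mem dist s.C hC
        set base : SState V := ⟨s.C.erase u, s.R, s.visited⟩ with hbase
        have hb0 : base.R ⊆ base.visited := h0
        have hb2 : base.C ⊆ base.visited := fun z hz => h2 (Finset.erase_subset _ _ hz)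
        have hb1 : ∀ v ∈ base.visited, rank dist v ≤ L → v ∈ base.R := h1
        obtain ⟨b0, b1, b2, b3, b4, b5, b6, b7⟩ :=
          insertLoop_spec dist L ((Finset.univ.filter fun v => Adj u v).toList) base hb0 hb2 hb1
        set s₂ := insertLoop dist L ((Finset.univ.filter fun v => Adj u v).toList) base with hs₂
        have hsub : insert u (s.visited \ s.C) ⊆ s₂.visited \ s₂.C := by
          intro z hz
          rcases Finset.mem_insert.mp hz with hzu | hz
          · subst hzu
            refine Finset.mem_sdiff.mpr ⟨b3 (h2 huC), ?_⟩
            intro hzC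
            rcases b6 u hzC with hzc | hzv
            · exact (Finset.mem_erase.mp hzc).1 rfl
            · exact hzv (h2 huC)
          · obtain ⟨hzv, hzC⟩ := Finset.mem_sdiff.mp hz
            refine Finset.mem_sdiff.mpr ⟨b3 hzv, ?_⟩
            intro hzC₂
            rcases b6 z hzC₂ with hzc | hzv'
            · exact hzC (Finset.erase_subset _ _ hzc)
            · exact hzv' hzv
        have hcard : (s.visited \ s.C).card + 1 ≤ (s₂.visited \ s₂.C).card := by
          have huns : u ∉ s.visited \ s.C := fun hmem => (Finset.mem_sdiff.mp hmem).2 huC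
          calc (s.visited \ s.C).card + 1 = (insert u (s.visited \ s.C)).card :=
                (Finset.card_insert_of_notMem huns).symm
            _ ≤ _ := Finset.card_le_card hsub
        exact ihn s₂ b0 b1 b2 (by omega)
    · rw [dif_neg hC]
      intro hC'
      exact absurd hC' hC

lemma terminal_closed (Adj : V → V → Prop) (dist : V → ℝ) (L : ℕ) (s : SState V)
    (hInv : Inv Adj dist L s) (hT : Terminal dist s) :
    ∀ v ∈ s.visited, rank dist v ≤ L → ∀ w, Adj v w → w ∈ s.visited := by
  intro v hv hrk w hw
  rcases hInv.2.2.2 v hv hrk with hvC | hnb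
  · exfalso
    have hC : s.C.Nonempty := ⟨v, hvC⟩
    obtain ⟨hRne, hRlt⟩ := hT hC
    set u := argmin dist s.C hC with hu
    have huv : dist u ≤ dist v := argmin_le dist s.C hC v hvC
    have hurk : rank dist u ≤ L := le_trans (rank_mono dist huv) hrk
    have huR : u ∈ s.R := hInv.2.2.1 u (hInv.2.1 (argmin_mem dist s.C hC)) hurk
    exact lt_irrefl _ (hRlt u huR)
  · exact hnb w hw

lemma foldr_max_le {l : List ℕ} {m : ℕ} (h : l.foldr max 0 ≤ m) : ∀ a ∈ l, a ≤ m := by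
  induction l with
  | nil => simp
  | cons b t ih =>
    simp only [List.foldr_cons, max_le_iff] at h
    intro a ha
    rcases List.mem_cons.mp ha with rfl | ha
    · exact h.1
    · exact ih h.2 a ha

lemma chain_visited (Adj : V → V → Prop) (dist : V → ℝ) (L : ℕ) (s : SState V)
    (hcl : ∀ v ∈ s.visited, rank dist v ≤ L → ∀ w, Adj v w → w ∈ s.visited) :
    ∀ p : List V, p.Chain' Adj → (∀ v ∈ p, rank dist v ≤ L) →
      ∀ a, p.head? = some a → a ∈ s.visited → ∀ b, p.getLast? = some b → b ∈ s.visited := by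
  intro p
  induction p with
  | nil => intro _ _ a ha; simp at ha
  | cons v vs ih =>
    intro hch hrk a ha hav b hb
    simp only [List.head?_cons, Option.some.injEq] at ha
    subst ha
    cases vs with
    | nil =>
      simp only [List.getLast?_singleton, Option.some.injEq] at hb
      subst hb; exact hav
    | cons w t =>
      have hadj : Adj v w := (List.isChain_cons_cons.mp hch).1
      have hwv : w ∈ s.visited := hcl v hav (hrk v (by simp)) w hadj
      rw [List.getLast?_cons_cons] at hb
      exact ih (List.isChain_cons_cons.mp hch).2 (fun z hz => hrk z (List.mem_cons_of_mem _ hz))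
        w rfl hwv b hb

lemma card_rank_ge (dist : V → ℝ) (hinj : Function.Injective dist) {k : ℕ} {x : V}
    (hx : k < rank dist x) :
    k ≤ (Finset.univ.filter fun y => rank dist y ≤ k).card := by
  set T := Finset.univ.filter fun y => k < rank dist y with hT
  have hxT : x ∈ T := Finset.mem_filter.mpr ⟨Finset.mem_univ _, hx⟩
  obtain ⟨z, hzT, hzmin⟩ := T.exists_min_image dist ⟨x, hxT⟩
  have hzrk : k < rank dist z := (Finset.mem_filter.mp hzT).2
  have hsub : (Finset.univ.filter fun y => dist y < dist z) ⊆
      Finset.univ.filter fun y => rank dist y ≤ k := by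
    intro y hy
    simp only [Finset.mem_filter, Finset.mem_univ, true_and] at hy ⊢
    by_contra hyk
    have hyT : y ∈ T := Finset.mem_filter.mpr ⟨Finset.mem_univ _, not_le.mp hyk⟩
    exact absurd hy (not_lt.mpr (hzmin y hyT))
  have hins : (Finset.univ.filter fun y => dist y ≤ dist z)
      = insert z (Finset.univ.filter fun y => dist y < dist z) := by
    ext y
    simp only [Finset.mem_filter, Finset.mem_univ, true_and, Finset.mem_insert]
    constructor
    · intro h
      rcases lt_or_eq_of_le h with h | h
      · exact Or.inr h
      · exact Or.inl (hinj h)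
    · rintro (rfl | h)
      · exact le_refl _
      · exact h.le
  have hcard : (Finset.univ.filter fun y => dist y < dist z).card + 1 = rank dist z := by
    rw [rank, hins, Finset.card_insert_of_notMem (by simp)]
  have := Finset.card_le_card hsub
  omega

end BeamProof

end BeamSearchProof


/-- If every vertex among the `N_q` nearest neighbors of `q` is
`K_h`-reachable from every other (`EH(N_{i,q}, N_{j,q}, q, G) ≤ K_h` for all
`1 ≤ i, j ≤ N_q`), and the entry point is among the `N_q` nearest, then greedy
beam search with result-list size `L = K_h ≥ N_q` and `k ≤ N_q` returns exactly
the `k` nearest neighbors of `q` (recall@k = 100%): the `k` closest points of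
the final result set `R` are exactly the vertices of rank `≤ k`. -/
theorem greedy_search_exact_recall
    (Adj : V → V → Prop) (dist : V → ℝ) (hinj : Function.Injective dist)
    (Nq Kh k : ℕ) (hNK : Nq ≤ Kh) (hk : k ≤ Nq)
    (hEH : ∀ u v : V, rank dist u ≤ Nq → rank dist v ≤ Nq →
      EH Adj (rank dist) u v ≤ (Kh : ℕ∞))
    (e : V) (he : rank dist e ≤ Nq) :
    ∀ x : V, x ∈ truncate dist k (search Adj dist Kh e).R ↔ rank dist x ≤ k := by
  intro x
  rw [search]
  have hInv0 : BeamProof.Inv Adj dist Kh (⟨{e},{e},{e}⟩ : SState V) :=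
    ⟨subset_rfl, subset_rfl, fun v hv _ => hv, fun v hv _ => Or.inl hv⟩
  obtain ⟨hInvF, hmono⟩ :=
    BeamProof.gloop_spec Adj dist Kh (Fintype.card V + 1) ⟨{e},{e},{e}⟩ hInv0
  have hTerm := BeamProof.gloop_terminal Adj dist Kh (Fintype.card V + 1) ⟨{e},{e},{e}⟩
    hInv0.1 hInv0.2.1 hInv0.2.2.1 (Nat.le_add_right _ _)
  set sF := gloop Adj dist Kh (Fintype.card V + 1) (⟨{e},{e},{e}⟩ : SState V) with hsF
  have hcl := BeamProof.terminal_closed Adj dist Kh sF hInvF hTerm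
  have heV : e ∈ sF.visited := hmono (by simp)
  have hvis : ∀ t : V, rank dist t ≤ Nq → t ∈ sF.visited := by
    intro t ht
    have hEH' := hEH e t he ht
    have hlt : EH Adj (rank dist) e t < ((Kh + 1 : ℕ) : ℕ∞) :=
      lt_of_le_of_lt hEH' (by exact_mod_cast Nat.lt_succ_self Kh)
    rw [EH, sInf_lt_iff] at hlt
    obtain ⟨n, hnmem, hn⟩ := hlt
    obtain ⟨p, hp, rfl⟩ := hnmem
    have hmax : (p.map (rank dist)).foldr max 0 ≤ Kh :=
      Nat.lt_succ_iff.mp (by exact_mod_cast hn)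
    have hrkp : ∀ v ∈ p, rank dist v ≤ Kh := fun v hv =>
      BeamProof.foldr_max_le hmax _ (List.mem_map_of_mem hv)
    exact BeamProof.chain_visited Adj dist Kh sF hcl p hp.2.2 hrkp e hp.1 heV t hp.2.1
  have hR : ∀ t : V, rank dist t ≤ Nq → t ∈ sF.R := fun t ht =>
    hInvF.2.2.1 t (hvis t ht) (le_trans ht hNK)
  simp only [truncate, Finset.mem_filter]
  constructor
  · rintro ⟨hxR, hcnt⟩
    by_contra hxk
    have hxk' : k < rank dist x := not_le.mp hxk
    set A := Finset.univ.filter fun y => rank dist y ≤ k with hA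
    have hxA : x ∉ A := by
      simp only [hA, Finset.mem_filter, Finset.mem_univ, true_and]
      exact hxk
    have hsub : insert x A ⊆ sF.R.filter fun y => dist y ≤ dist x := by
      intro y hy
      rcases Finset.mem_insert.mp hy with rfl | hy
      · exact Finset.mem_filter.mpr ⟨hxR, le_refl _⟩
      · have hyk : rank dist y ≤ k := (Finset.mem_filter.mp hy).2
        exact Finset.mem_filter.mpr ⟨hR y (le_trans hyk hk),
          BeamProof.dist_le_of_rank_le dist (le_trans hyk hxk'.le)⟩
    have hge := BeamProof.card_rank_ge dist hinj hxk'
    rw [← hA] at hge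
    have hfin : k + 1 ≤ (sF.R.filter fun y => dist y ≤ dist x).card := by
      calc k + 1 ≤ A.card + 1 := by omega
        _ = (insert x A).card := (Finset.card_insert_of_notMem hxA).symm
        _ ≤ _ := Finset.card_le_card hsub
    omega
  · intro hxk
    exact ⟨hR x (le_trans hxk hk), le_trans (BeamProof.cnt_le_rank dist sF.R x) hxk⟩
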